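/- Let A1, A2 be commuting n×n complex matrices. A pair (λ1, λ2) ∈ ℂ² is a joint eigenvalue of (A1, A2) (i.e., there exists a nonzero vector v with A1 v = λ1 v and A2 v = λ2 v) if and only if for all ξ1, ξ2 ∈ ℂ, the matrix ξ1(λ1 I − A1) + ξ2(λ2 I − A2) is not invertible. -/

import Mathlib

open Module Module.End Function Finset

set_option maxHeartbeats 1000000

/-- Pointwise nilpotency of a sum of commuting operators. -/
lemma aux_pt_nilpotent {R M : Type*} [CommRing R] [AddCommGroup M] [Module R M]
    (a b : Module.End R M) (h : Commute a b) (x : M) {ka kb : ℕ}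
    (ha : (a ^ ka) x = 0) (hb : (b ^ kb) x = 0) : ((a + b) ^ (ka + kb)) x = 0 := by
  rw [h.add_pow, LinearMap.sum_apply]
  apply Finset.sum_eq_zero
  intro m hm
  simp only [Finset.mem_range] at hm
  rcases le_or_gt kb (ka + kb - m) with hle | hlt
  · have : b ^ (ka + kb - m) = b ^ (ka + kb - m - kb) * b ^ kb := by
      rw [← pow_add]; congr 1; omega
    simp [Module.End.mul_apply, this, hb, Module.End.natCast_apply]
  · have hka : ka ≤ m := by omega
    have hcomm := (h.pow_pow m (ka + kb - m)).eq
    have hsplit : a ^ m = a ^ (m - ka) * a ^ ka := by rw [← pow_add]; congr 1; omega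
    rw [hcomm, mul_assoc, Module.End.mul_apply, hsplit]
    simp [Module.End.mul_apply, Module.End.natCast_apply, ha]

/-- Extracting an eigenvector with prescribed eigenvalue inside an invariant submodule
contained in the corresponding maximal generalized eigenspace. -/
lemma aux_exists_eig_inf {V : Type*} [AddCommGroup V] [Module ℂ V] [FiniteDimensional ℂ V]
    (f : Module.End ℂ V) (l : ℂ) (p : Submodule ℂ V) (hp : p ≠ ⊥)
    (hmap : Set.MapsTo f p p) (hle : p ≤ f.maxGenEigenspace l) :
    f.eigenspace l ⊓ p ≠ ⊥ := by
  haveI : Nontrivial p := Submodule.nontrivial_iff_ne_bot.mpr hp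
  obtain ⟨μ, hμ⟩ := Module.End.exists_eigenvalue (f.restrict hmap)
  obtain ⟨x, hx, hx0⟩ := hμ.exists_hasEigenvector
  have hfx : f x.1 = μ • x.1 := by
    have := mem_eigenspace_iff.mp hx
    exact congrArg Subtype.val this
  have hx1 : (x : V) ≠ 0 := by simpa [Submodule.coe_eq_zero] using hx0
  have hμl : μ = l := by
    by_contra hne
    have hd := f.disjoint_genEigenspace hne 1 ⊤
    have h1 : x.1 ∈ f.genEigenspace μ 1 := mem_eigenspace_iff.mpr hfx
    have h2 : x.1 ∈ f.genEigenspace l ⊤ := hle x.2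
    exact hx1 (Submodule.disjoint_def.mp hd _ h1 h2)
  subst hμl
  exact (Submodule.ne_bot_iff _).mpr ⟨x.1, ⟨mem_eigenspace_iff.mpr hfx, x.2⟩, hx1⟩

/-- For commuting n×n complex matrices, (λ1, λ2) is a joint eigenvalue
iff every linear combination ξ1(λ1 I − A1) + ξ2(λ2 I − A2) fails to be invertible. -/
theorem joint_spectrum_characterization {n : ℕ}
    (A1 A2 : Matrix (Fin n) (Fin n) ℂ) (hcomm : A1 * A2 = A2 * A1) (l1 l2 : ℂ) :
    (∃ v : Fin n → ℂ, v ≠ 0 ∧ A1.mulVec v = l1 • v ∧ A2.mulVec v = l2 • v) ↔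
      ∀ ξ1 ξ2 : ℂ,
        ¬ IsUnit (ξ1 • (l1 • (1 : Matrix (Fin n) (Fin n) ℂ) - A1) +
            ξ2 • (l2 • (1 : Matrix (Fin n) (Fin n) ℂ) - A2)) := by
  set E := (Matrix.toLinAlgEquiv' : Matrix (Fin n) (Fin n) ℂ ≃ₐ[ℂ] _) with hE
  set f : Module.End ℂ (Fin n → ℂ) := E A1 with hf
  set g : Module.End ℂ (Fin n → ℂ) := E A2 with hg
  have hfg : Commute f g := by
    unfold Commute SemiconjBy
    rw [hf, hg, ← map_mul, ← map_mul, hcomm]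
  have hmat : ∀ ξ1 ξ2 : ℂ,
      E (ξ1 • (l1 • (1 : Matrix (Fin n) (Fin n) ℂ) - A1) +
          ξ2 • (l2 • (1 : Matrix (Fin n) (Fin n) ℂ) - A2)) =
        ξ1 • (l1 • (1 : Module.End ℂ (Fin n → ℂ)) - f) + ξ2 • (l2 • 1 - g) := by
    intro ξ1 ξ2
    simp [map_add, map_smul, map_sub, map_one, hf, hg]
  have hunit : ∀ ξ1 ξ2 : ℂ,
      IsUnit (ξ1 • (l1 • (1 : Matrix (Fin n) (Fin n) ℂ) - A1) +
          ξ2 • (l2 • (1 : Matrix (Fin n) (Fin n) ℂ) - A2)) ↔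
      IsUnit (ξ1 • (l1 • (1 : Module.End ℂ (Fin n → ℂ)) - f) + ξ2 • (l2 • 1 - g)) := by
    intro ξ1 ξ2
    rw [← hmat]
    constructor
    · exact fun h => h.map E
    · intro h
      have := h.map E.symm
      simpa using this
  constructor
  · rintro ⟨v, hv, h1, h2⟩ ξ1 ξ2 hU
    rw [hunit] at hU
    have hbij := (Module.End.isUnit_iff _).mp hU
    have hfv : f v = l1 • v := by rw [hf]; simpa [hE, Matrix.toLinAlgEquiv'_apply] using h1
    have hgv : g v = l2 • v := by rw [hg]; simpa [hE, Matrix.toLinAlgEquiv'_apply] using h2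
    have : (ξ1 • (l1 • (1 : Module.End ℂ (Fin n → ℂ)) - f) + ξ2 • (l2 • 1 - g)) v = 0 := by
      simp [LinearMap.add_apply, LinearMap.smul_apply, LinearMap.sub_apply, hfv, hgv]
    exact hv (hbij.injective (by simpa using this))
  · intro h
    by_contra hno
    push_neg at hno
    -- Step A : the joint (l1,l2) generalized eigenspace is trivial
    have hmapsf : ∀ (a : Module.End ℂ (Fin n → ℂ)) (μ : ℂ), Commute a f →
        Set.MapsTo a (f.maxGenEigenspace μ) (f.maxGenEigenspace μ) := fun a μ hc =>
      mapsTo_maxGenEigenspace_of_comm hc.symm μ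
    have hW0 : f.maxGenEigenspace l1 ⊓ g.maxGenEigenspace l2 = ⊥ := by
      by_contra hW0
      set W0 := f.maxGenEigenspace l1 ⊓ g.maxGenEigenspace l2 with hW0def
      have hfW0 : Set.MapsTo f W0 W0 := fun x hx =>
        ⟨mapsTo_maxGenEigenspace_of_comm (Commute.refl f) l1 hx.1,
         mapsTo_maxGenEigenspace_of_comm hfg.symm l2 hx.2⟩
      have hp1 := aux_exists_eig_inf f l1 W0 hW0 hfW0 (fun x hx => hx.1)
      set p1 := f.eigenspace l1 ⊓ W0 with hp1def
      have hgp1 : Set.MapsTo g p1 p1 := fun x hx =>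
        ⟨mapsTo_genEigenspace_of_comm hfg l1 1 hx.1,
         mapsTo_maxGenEigenspace_of_comm hfg l1 hx.2.1,
         mapsTo_maxGenEigenspace_of_comm (Commute.refl g) l2 hx.2.2⟩
      have hp1le : p1 ≤ g.maxGenEigenspace l2 := fun x hx => hx.2.2
      have hp2 := aux_exists_eig_inf g l2 p1 hp1 hgp1 hp1le
      obtain ⟨v, hvmem, hv0⟩ := (Submodule.ne_bot_iff _).mp hp2
      have hfv : f v = l1 • v := mem_eigenspace_iff.mp hvmem.2.1
      have hgv : g v = l2 • v := mem_eigenspace_iff.mp hvmem.1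
      have h1 : A1.mulVec v = l1 • v := by rw [← hfv]; rfl
      have h2 : A2.mulVec v = l2 • v := by rw [← hgv]; rfl
      exact hno v hv0 h1 h2
    -- Step B : choose a good scalar c
    set bad : Set ℂ := (fun p : ℂ × ℂ => (p.2 - l2) / (l1 - p.1)) ''
      ((setOf f.HasEigenvalue) ×ˢ (setOf g.HasEigenvalue)) with hbad
    have hbadfin : bad.Finite :=
      ((f.finite_hasEigenvalue.prod g.finite_hasEigenvalue).image _)
    obtain ⟨c, hc⟩ := hbadfin.infinite_compl.nonempty
    -- Step C : simultaneous generalized eigenspace decomposition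
    set F : Bool → Module.End ℂ (Fin n → ℂ) := fun b => Bool.rec f g b with hF
    have hdec : ⨆ χ : Bool → ℂ, ⨅ i, (F i).maxGenEigenspace (χ i) = ⊤ := by
      apply Module.End.iSup_iInf_maxGenEigenspace_eq_top_of_iSup_maxGenEigenspace_eq_top_of_commute
      · intro i j hij
        rcases i <;> rcases j
        · exact (hij rfl).elim
        · exact hfg
        · exact hfg.symm
        · exact (hij rfl).elim
      · intro i
        exact Module.End.iSup_maxGenEigenspace_eq_top _
    set m : Module.End ℂ (Fin n → ℂ) := c • (l1 • 1 - f) + (1 : ℂ) • (l2 • 1 - g) with hm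
    have hsurj : Function.Surjective m := by
      rw [← LinearMap.range_eq_top]
      rw [eq_top_iff, ← hdec]
      apply iSup_le
      intro χ
      rcases eq_or_ne (⨅ i, (F i).maxGenEigenspace (χ i)) ⊥ with hbot | hne
      · rw [hbot]; exact bot_le
      -- the joint eigenvalue is not (l1, l2)
      have hχne : ¬ (χ false = l1 ∧ χ true = l2) := by
        rintro ⟨hχ1, hχ2⟩
        apply hne
        rw [eq_bot_iff, ← hW0]
        intro x hx
        rw [Submodule.mem_iInf] at hx
        exact ⟨hχ1 ▸ hx false, hχ2 ▸ hx true⟩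
      have hev1 : f.HasEigenvalue (χ false) := by
        have h1 : (⨅ i, (F i).maxGenEigenspace (χ i)) ≤ f.maxGenEigenspace (χ false) :=
          iInf_le (fun i => (F i).maxGenEigenspace (χ i)) false
        have : f.maxGenEigenspace (χ false) ≠ ⊥ := fun hb => hne (le_bot_iff.mp (hb ▸ h1))
        rw [maxGenEigenspace_eq_genEigenspace_finrank] at this
        exact hasEigenvalue_of_hasGenEigenvalue (k := finrank ℂ (Fin n → ℂ)) this
      have hev2 : g.HasEigenvalue (χ true) := by
        have h1 : (⨅ i, (F i).maxGenEigenspace (χ i)) ≤ g.maxGenEigenspace (χ true) :=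
          iInf_le (fun i => (F i).maxGenEigenspace (χ i)) true
        have : g.maxGenEigenspace (χ true) ≠ ⊥ := fun hb => hne (le_bot_iff.mp (hb ▸ h1))
        rw [maxGenEigenspace_eq_genEigenspace_finrank] at this
        exact hasEigenvalue_of_hasGenEigenvalue (k := finrank ℂ (Fin n → ℂ)) this
      set α : ℂ := c * (l1 - χ false) + (l2 - χ true) with hα
      have hα0 : α ≠ 0 := by
        rcases eq_or_ne (χ false) l1 with h1 | h1
        · have h2 : χ true ≠ l2 := fun h2 => hχne ⟨h1, h2⟩
          rw [hα, h1]
          simpa using sub_ne_zero.mpr (Ne.symm h2)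
        · intro h0
          apply hc
          refine ⟨(χ false, χ true), ⟨hev1, hev2⟩, ?_⟩
          have hne1 : l1 - χ false ≠ 0 := sub_ne_zero.mpr (Ne.symm h1)
          field_simp
          rw [hα] at h0
          ring_nf
          ring_nf at h0
          linear_combination -h0
      -- on the joint generalized eigenspace, m = α • 1 - nilpotent
      intro x hx
      rw [Submodule.mem_iInf] at hx
      have hxf : x ∈ f.maxGenEigenspace (χ false) := hx false
      have hxg : x ∈ g.maxGenEigenspace (χ true) := hx true
      obtain ⟨ka, hka⟩ := (mem_maxGenEigenspace f (χ false) x).mp hxf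
      obtain ⟨kb, hkb⟩ := (mem_maxGenEigenspace g (χ true) x).mp hxg
      set a : Module.End ℂ (Fin n → ℂ) := c • (f - χ false • 1) with ha
      set b : Module.End ℂ (Fin n → ℂ) := g - χ true • 1 with hb
      have hax : (a ^ ka) x = 0 := by
        rw [ha, smul_pow, LinearMap.smul_apply, hka, smul_zero]
      have hbx : (b ^ kb) x = 0 := hkb
      have hab : Commute a b := by
        have c1 : Commute f (g - χ true • 1) :=
          hfg.sub_right ((Commute.one_right f).smul_right _)
        have c2 : Commute (χ false • (1 : Module.End ℂ (Fin n → ℂ))) (g - χ true • 1) :=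
          (((Commute.one_left g).smul_left _)).sub_right
            (((Commute.refl (1 : Module.End ℂ (Fin n → ℂ))).smul_left _).smul_right _)
        exact (c1.sub_left c2).smul_left c
      set nn : Module.End ℂ (Fin n → ℂ) := a + b with hnn
      have hnx : (nn ^ (ka + kb)) x = 0 := aux_pt_nilpotent a b hab x hax hbx
      have hmeq : m = α • 1 - nn := by
        rw [hm, hα, hnn, ha, hb]
        module
      -- geometric series inverse
      set r : Module.End ℂ (Fin n → ℂ) := α⁻¹ • nn with hr
      set S : Module.End ℂ (Fin n → ℂ) := ∑ i ∈ Finset.range (ka + kb), r ^ i with hS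
      have hrx : (r ^ (ka + kb)) x = 0 := by
        rw [hr, smul_pow, LinearMap.smul_apply, hnx, smul_zero]
      have hmS : m * S = α • (1 - r ^ (ka + kb)) := by
        have h1 : m = α • (1 - r) := by
          rw [hmeq, hr, smul_sub, smul_smul, mul_inv_cancel₀ hα0, one_smul]
        have h2 : (1 - r) * S = 1 - r ^ (ka + kb) := by
          have h3 := mul_geom_sum r (ka + kb)
          have h4 : (1 - r) * S = -((r - 1) * S) := by rw [sub_mul, sub_mul, one_mul, neg_sub]
          rw [h4, h3, neg_sub]
        rw [h1, smul_mul_assoc, h2]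
      refine ⟨α⁻¹ • S x, ?_⟩
      have : m (S x) = α • x := by
        have := congrArg (fun T : Module.End ℂ (Fin n → ℂ) => T x) hmS
        simp only [Module.End.mul_apply, LinearMap.smul_apply, LinearMap.sub_apply,
          Module.End.one_apply] at this
        rw [this, hrx, sub_zero]
      rw [map_smul, this, smul_smul, inv_mul_cancel₀ hα0, one_smul]
    have hinj : Function.Injective m := LinearMap.injective_iff_surjective.mpr hsurj
    have hUm : IsUnit m := (Module.End.isUnit_iff m).mpr ⟨hinj, hsurj⟩
    refine h c 1 ?_
    rw [hunit c 1]
    simpa [hm] using hUm
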